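/- arXiv:2409.05066 — 2 statements merged into one kernel-verified Lean document; each statement's English description precedes it below -/
import Mathlib

section
/- Let λ > 0, A an invertible d×d matrix, and X an n×d matrix with all required inverses existing. Then Xᵀ(X A Xᵀ + λI)⁻² X = {A + λ(XᵀX)⁻¹}⁻¹ (XᵀX)⁻¹ {A + λ(XᵀX)⁻¹}⁻¹. -/
open Matrix

lemma inv_conj_aux {n d : ℕ} (P : Matrix (Fin d) (Fin n) ℝ)
    (V : Matrix (Fin n) (Fin n) ℝ) (W : Matrix (Fin d) (Fin d) ℝ)
    (hV : IsUnit V.det) (hW : IsUnit W.det) (h : P * V = W * P) :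
    P * V⁻¹ = W⁻¹ * P := by
  calc P * V⁻¹ = W⁻¹ * (W * (P * V⁻¹)) := by
        rw [← Matrix.mul_assoc, Matrix.nonsing_inv_mul _ hW, Matrix.one_mul]
    _ = W⁻¹ * (W * P * V⁻¹) := by rw [Matrix.mul_assoc W P]
    _ = W⁻¹ * (P * V * V⁻¹) := by rw [h]
    _ = W⁻¹ * P := by rw [Matrix.mul_assoc, Matrix.mul_nonsing_inv _ hV, Matrix.mul_one]

theorem Xt_inv_sq_X {n d : ℕ} (lam : ℝ) (hlam : 0 < lam)
    (A : Matrix (Fin d) (Fin d) ℝ) (X : Matrix (Fin n) (Fin d) ℝ)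
    (hA : IsUnit A.det) (hXX : IsUnit (Xᵀ * X).det)
    (hV : IsUnit (X * A * Xᵀ + lam • (1 : Matrix (Fin n) (Fin n) ℝ)).det)
    (hAX : IsUnit (A + lam • (Xᵀ * X)⁻¹).det) :
    Xᵀ * ((X * A * Xᵀ + lam • (1 : Matrix (Fin n) (Fin n) ℝ))⁻¹ *
        (X * A * Xᵀ + lam • (1 : Matrix (Fin n) (Fin n) ℝ))⁻¹) * X =
      (A + lam • (Xᵀ * X)⁻¹)⁻¹ * (Xᵀ * X)⁻¹ * (A + lam • (Xᵀ * X)⁻¹)⁻¹ := by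
  set V := X * A * Xᵀ + lam • (1 : Matrix (Fin n) (Fin n) ℝ) with hVdef
  set M := Xᵀ * X with hMdef
  set C := A + lam • M⁻¹ with hCdef
  have hMC : M * C = M * A + lam • (1 : Matrix (Fin d) (Fin d) ℝ) := by
    rw [hCdef, Matrix.mul_add, Matrix.mul_smul, Matrix.mul_nonsing_inv _ hXX]
  have hW : IsUnit (M * C).det := by
    rw [Matrix.det_mul]; exact hXX.mul hAX
  have hkey : Xᵀ * V = (M * C) * Xᵀ := by
    rw [hVdef, hMC, Matrix.mul_add, Matrix.add_mul, Matrix.mul_smul,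
      Matrix.smul_mul, Matrix.mul_one, Matrix.one_mul, hMdef]
    congr 1
    simp only [Matrix.mul_assoc]
  have hkey' : Xᵀ * V⁻¹ = (M * C)⁻¹ * Xᵀ := inv_conj_aux _ _ _ hV hW hkey
  have hinv : (M * C)⁻¹ = C⁻¹ * M⁻¹ := Matrix.mul_inv_rev M C
  calc Xᵀ * (V⁻¹ * V⁻¹) * X
      = (Xᵀ * V⁻¹) * V⁻¹ * X := by simp only [Matrix.mul_assoc]
    _ = (M * C)⁻¹ * (Xᵀ * V⁻¹) * X := by
        conv_lhs => rw [hkey']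
        rw [Matrix.mul_assoc (M * C)⁻¹ Xᵀ V⁻¹]
    _ = (M * C)⁻¹ * ((M * C)⁻¹ * M) := by rw [hkey', hMdef]; simp only [Matrix.mul_assoc]
    _ = C⁻¹ * M⁻¹ * (C⁻¹ * (M⁻¹ * M)) := by rw [hinv]; simp only [Matrix.mul_assoc]
    _ = C⁻¹ * M⁻¹ * C⁻¹ := by rw [Matrix.nonsing_inv_mul _ hXX, Matrix.mul_one]
end

section
/- Let M and M' be d×d symmetric positive definite matrices and X₁₁, X₂₁ be n×d matrices with invertible Gram matrices. Then the top-left block of the inverse of the 2×2 block matrix [[X₁₁(M+M')X₁₁ᵀ + λI, X₁₁M'X₂₁ᵀ], [X₂₁M'X₁₁ᵀ, X₂₁(M+M')X₂₁ᵀ + λI]], when multiplied left by X₁₁ᵀ and right by X₁₁, equals [M + M' − M'{M + M' + λ(X₂₁ᵀX₂₁)⁻¹}⁻¹M' + λ(X₁₁ᵀX₁₁)⁻¹]⁻¹. -/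
open Matrix

/-- Key identity: `Xᵀ (X A Xᵀ + λI)⁻¹ X = (A + λ(XᵀX)⁻¹)⁻¹`. -/
lemma sandwich_key {n d : ℕ} (lam : ℝ) (X : Matrix (Fin n) (Fin d) ℝ)
    (A : Matrix (Fin d) (Fin d) ℝ)
    (hG : IsUnit (Xᵀ * X).det)
    (hP : IsUnit (X * A * Xᵀ + lam • (1 : Matrix (Fin n) (Fin n) ℝ)).det)
    (hS : IsUnit (A + lam • (Xᵀ * X)⁻¹).det) :
    Xᵀ * (X * A * Xᵀ + lam • (1 : Matrix (Fin n) (Fin n) ℝ))⁻¹ * X =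
      (A + lam • (Xᵀ * X)⁻¹)⁻¹ := by
  set G := Xᵀ * X with hGdef
  set P := X * A * Xᵀ + lam • (1 : Matrix (Fin n) (Fin n) ℝ) with hPdef
  set S := A + lam • G⁻¹ with hSdef
  have hGG : G * G⁻¹ = 1 := Matrix.mul_nonsing_inv _ hG
  have h1 : X * S = P * (X * G⁻¹) := by
    rw [hSdef, hPdef]
    have : X * A * Xᵀ * (X * G⁻¹) = X * A := by
      rw [Matrix.mul_assoc (X * A), ← Matrix.mul_assoc Xᵀ, ← hGdef, hGG, Matrix.mul_one]
    rw [Matrix.add_mul, this, Matrix.mul_add, Matrix.smul_mul, Matrix.one_mul,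
      Matrix.mul_smul]
  have h2 : (Xᵀ * P⁻¹ * X) * S = 1 := by
    rw [Matrix.mul_assoc (Xᵀ * P⁻¹), h1, ← Matrix.mul_assoc (Xᵀ * P⁻¹),
      Matrix.mul_assoc Xᵀ, Matrix.nonsing_inv_mul _ hP, Matrix.mul_one,
      ← Matrix.mul_assoc, ← hGdef, hGG]
  exact (Matrix.inv_eq_left_inv h2).symm

theorem block_inv_topLeft_sandwich {n d : ℕ} (lam : ℝ) (hlam : 0 < lam)
    (M M' : Matrix (Fin d) (Fin d) ℝ) (hM : M.PosDef) (hM' : M'.PosDef)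
    (X11 X21 : Matrix (Fin n) (Fin d) ℝ)
    (h11 : IsUnit (X11ᵀ * X11).det) (h21 : IsUnit (X21ᵀ * X21).det)
    (hQ : IsUnit (Matrix.fromBlocks
        (X11 * (M + M') * X11ᵀ + lam • (1 : Matrix (Fin n) (Fin n) ℝ))
        (X11 * M' * X21ᵀ)
        (X21 * M' * X11ᵀ)
        (X21 * (M + M') * X21ᵀ + lam • (1 : Matrix (Fin n) (Fin n) ℝ))).det)
    (hSchur : IsUnit (M + M' + lam • (X21ᵀ * X21)⁻¹).det)
    (hBr : IsUnit (M + M' - M' * (M + M' + lam • (X21ᵀ * X21)⁻¹)⁻¹ * M'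
        + lam • (X11ᵀ * X11)⁻¹).det) :
    X11ᵀ * (Matrix.fromBlocks
        (X11 * (M + M') * X11ᵀ + lam • (1 : Matrix (Fin n) (Fin n) ℝ))
        (X11 * M' * X21ᵀ)
        (X21 * M' * X11ᵀ)
        (X21 * (M + M') * X21ᵀ + lam • (1 : Matrix (Fin n) (Fin n) ℝ)))⁻¹.toBlocks₁₁
      * X11 =
      (M + M' - M' * (M + M' + lam • (X21ᵀ * X21)⁻¹)⁻¹ * M'
        + lam • (X11ᵀ * X11)⁻¹)⁻¹ := by
  set A := X11 * (M + M') * X11ᵀ + lam • (1 : Matrix (Fin n) (Fin n) ℝ) with hA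
  set B := X11 * M' * X21ᵀ with hB
  set C := X21 * M' * X11ᵀ with hC
  set D := X21 * (M + M') * X21ᵀ + lam • (1 : Matrix (Fin n) (Fin n) ℝ) with hD
  -- lam • 1 is positive definite
  have hl1 : ∀ m : ℕ, (lam • (1 : Matrix (Fin m) (Fin m) ℝ)).PosDef := by
    intro m
    rw [Matrix.smul_one_eq_diagonal]
    exact Matrix.posDef_diagonal_iff.mpr fun _ => hlam
  have hMM' : (M + M').PosDef := hM.add hM'
  -- D is positive definite, hence invertible
  have hDpd : D.PosDef := by
    rw [hD]
    have hsemi := hMM'.posSemidef.mul_mul_conjTranspose_same X21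
    rw [Matrix.conjTranspose_eq_transpose_of_trivial] at hsemi
    exact Matrix.PosDef.posSemidef_add hsemi (hl1 n)
  have hDunit : IsUnit D.det := hDpd.det_pos.ne'.isUnit
  haveI : Invertible D := D.invertibleOfIsUnitDet hDunit
  -- Schur complement of D is invertible
  have hSchurQ : IsUnit (A - B * D⁻¹ * C).det := by
    have hdet := Matrix.det_fromBlocks₂₂ A B C D
    rw [Matrix.invOf_eq_nonsing_inv] at hdet
    rw [hdet] at hQ
    exact (IsUnit.mul_iff.mp hQ).2
  haveI : Invertible (A - B * ⅟D * C) := by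
    rw [Matrix.invOf_eq_nonsing_inv]
    exact Matrix.invertibleOfIsUnitDet _ hSchurQ
  haveI : Invertible (Matrix.fromBlocks A B C D) :=
    Matrix.fromBlocks₂₂Invertible A B C D
  -- compute the top-left block of the inverse
  have hblock : (Matrix.fromBlocks A B C D)⁻¹.toBlocks₁₁ = (A - B * D⁻¹ * C)⁻¹ := by
    rw [← Matrix.invOf_eq_nonsing_inv, Matrix.invOf_fromBlocks₂₂_eq,
      Matrix.toBlocks_fromBlocks₁₁, Matrix.invOf_eq_nonsing_inv,
      Matrix.invOf_eq_nonsing_inv]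
  rw [hblock]
  -- the inner sandwich: X21ᵀ D⁻¹ X21 = (M + M' + lam (X21ᵀ X21)⁻¹)⁻¹
  have hinner : X21ᵀ * D⁻¹ * X21 = (M + M' + lam • (X21ᵀ * X21)⁻¹)⁻¹ :=
    sandwich_key lam X21 (M + M') h21 hDunit hSchur
  set S2 := (M + M' + lam • (X21ᵀ * X21)⁻¹)⁻¹ with hS2
  set N := M + M' - M' * S2 * M' with hN
  have hABDC : A - B * D⁻¹ * C = X11 * N * X11ᵀ + lam • (1 : Matrix (Fin n) (Fin n) ℝ) := by
    have h1 : B * D⁻¹ * C = X11 * (M' * S2 * M') * X11ᵀ := by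
      rw [hB, hC, ← hinner]
      simp only [Matrix.mul_assoc]
    rw [hA, h1, hN]
    simp only [Matrix.mul_sub, Matrix.sub_mul, Matrix.mul_assoc]
    abel
  rw [hABDC]
  have hfinal := sandwich_key lam X11 N h11 ?_ ?_
  · rw [hfinal, hN, hS2]
  · rw [← hABDC]; exact hSchurQ
  · rw [hN, hS2]
    convert hBr using 3
end
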